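/- With t(k) = ⌊√k⌋ (the integer part of the square root of k), the limit inferior as k → ∞ of Γ(k − 2·t(k), t(k))^{1/k} (real k-th roots) is at least 4. -/

import Mathlib

/-- A list `γ` of natural numbers is a *permitted sequence* of parameters
(`γ.length`, `t`) if its first entry is `0`, each entry exceeds the previous one by at
most `1`, and every entry is at most `t - 2`. -/
def PermittedSeq (t : ℕ) (γ : List ℕ) : Prop :=
  γ.head? = some 0 ∧ List.Chain' (fun a b => b ≤ a + 1) γ ∧ ∀ x ∈ γ, x ≤ t - 2

/-- `Γ(m, t)`: the number of permitted sequences of parameters `(m, t)`. -/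
noncomputable def permittedCount (m t : ℕ) : ℕ :=
  {γ : List ℕ | γ.length = m ∧ PermittedSeq t γ}.ncard

open List Filter Real Topology

namespace PermProof

/-- Łukasiewicz-type depth sequence of a binary tree. -/
def seqOf : Tree Unit → List ℕ
  | .nil => []
  | .node _ l r => 0 :: ((seqOf l).map (· + 1) ++ seqOf r)

@[simp] lemma seqOf_nil : seqOf .nil = [] := rfl
@[simp] lemma seqOf_node (a l r) : seqOf (.node a l r) = 0 :: ((seqOf l).map (· + 1) ++ seqOf r) := rfl

lemma length_seqOf (T : Tree Unit) : (seqOf T).length = T.numNodes := by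
  induction T with
  | nil => rfl
  | node a l r ihl ihr => simp [Tree.numNodes, ihl, ihr]


lemma mem_seqOf_lt {T : Tree Unit} : ∀ x ∈ seqOf T, x < T.numNodes := by
  induction T with
  | nil => simp
  | node a l r ihl ihr =>
    intro x hx
    simp only [seqOf_node, mem_cons, mem_append, List.mem_map] at hx
    simp only [Tree.numNodes, BinaryTree.numNodes]
    rcases hx with rfl | ⟨y, hy, rfl⟩ | h
    · omega
    · have := ihl y hy; simp only [Tree.numNodes] at this; omega
    · have := ihr x h; simp only [Tree.numNodes] at this; omega

lemma head?_seqOf {T : Tree Unit} (h : T ≠ .nil) : (seqOf T).head? = some 0 := by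
  cases T with
  | nil => exact absurd rfl h
  | node a l r => rfl

lemma chain'_seqOf (T : Tree Unit) : Chain' (fun a b => b ≤ a + 1) (seqOf T) := by
  induction T with
  | nil => exact List.isChain_nil
  | node a l r ihl ihr =>
    rw [seqOf_node]
    have hA : Chain' (fun a b => b ≤ a + 1) ((seqOf l).map (· + 1)) :=
      isChain_map_of_isChain _ (fun a b h => by omega) ihl
    have hAB : Chain' (fun a b => b ≤ a + 1) ((seqOf l).map (· + 1) ++ seqOf r) := by
      refine hA.append ihr ?_
      intro x hx y hy
      cases r with
      | nil => simp at hy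
      | node b rl rr => simp at hy; omega
    refine isChain_cons.2 ⟨?_, hAB⟩
    intro y hy
    cases l with
    | nil =>
      cases r with
      | nil => simp at hy
      | node b rl rr => simp at hy; omega
    | node b ll lr => simp at hy; omega

lemma split_eq : ∀ {l₁ : List ℕ} {r₁ l₂ r₂ : List ℕ}, l₁ ++ r₁ = l₂ ++ r₂ →
    (∀ x ∈ l₁, x ≠ 0) → (∀ x ∈ l₂, x ≠ 0) →
    (r₁.head? = some 0 ∨ r₁ = []) → (r₂.head? = some 0 ∨ r₂ = []) → l₁ = l₂ ∧ r₁ = r₂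
  | [], r₁, [], r₂, h, _, _, _, _ => ⟨rfl, h⟩
  | [], r₁, b :: l₂, r₂, h, _, h₂, g₁, _ => by
    simp only [nil_append] at h
    subst h
    rcases g₁ with g₁ | g₁
    · simp at g₁; exact absurd g₁ (h₂ b (by simp))
    · simp at g₁
  | a :: l₁, r₁, [], r₂, h, h₁, _, _, g₂ => by
    simp only [nil_append] at h
    rcases g₂ with g₂ | g₂
    · rw [← h] at g₂; simp at g₂; exact absurd g₂ (h₁ a (by simp))
    · rw [g₂] at h; simp at h
  | a :: l₁, r₁, b :: l₂, r₂, h, h₁, h₂, g₁, g₂ => by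
    simp only [cons_append, cons.injEq] at h
    obtain ⟨rfl, h⟩ := h
    obtain ⟨h3, h4⟩ := split_eq h (fun x hx => h₁ x (by simp [hx]))
      (fun x hx => h₂ x (by simp [hx])) g₁ g₂
    exact ⟨by rw [h3], h4⟩

lemma seqOf_injective : Function.Injective seqOf := by
  intro T₁
  induction T₁ with
  | nil => intro T₂ h; cases T₂ with
    | nil => rfl
    | node a l r => simp at h
  | node a l r ihl ihr =>
    intro T₂ h
    cases T₂ with
    | nil => simp at h
    | node a' l' r' =>
      simp only [seqOf_node, cons.injEq, true_and] at h
      obtain ⟨hl, hr⟩ := split_eq h (by simp) (by simp)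
        (by cases r with
          | nil => right; rfl
          | node _ _ _ => left; rfl)
        (by cases r' with
          | nil => right; rfl
          | node _ _ _ => left; rfl)
      have hl' : seqOf l = seqOf l' :=
        List.map_injective_iff.2 (fun x y hxy => by omega) hl
      cases a; cases a'
      rw [ihl hl', ihr hr]

def enc2 : ℕ → List ℕ → List Bool
  | _, [] => []
  | a, b :: l => replicate (a + 1 - b) false ++ (true :: enc2 b l)

lemma length_enc2 : ∀ (a : ℕ) (l : List ℕ), Chain' (fun a b => b ≤ a + 1) (a :: l) →
    (enc2 a l).length ≤ 2 * l.length + a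
  | _, [], _ => by simp [enc2]
  | a, b :: l, hc => by
    replace hc := isChain_cons_cons.1 hc
    have := length_enc2 b l hc.2
    have hb : b ≤ a + 1 := hc.1
    simp only [enc2, length_append, length_replicate, length_cons]
    omega

lemma repl_true_cancel : ∀ {n n' : ℕ} {u u' : List Bool},
    replicate n false ++ true :: u = replicate n' false ++ true :: u' → n = n' ∧ u = u'
  | 0, 0, u, u', h => by simpa using h
  | 0, n' + 1, u, u', h => by simp [replicate_succ] at h
  | n + 1, 0, u, u', h => by simp [replicate_succ] at h
  | n + 1, n' + 1, u, u', h => by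
    simp only [replicate_succ, cons_append, cons.injEq, true_and] at h
    obtain ⟨h1, h2⟩ := repl_true_cancel h
    exact ⟨by omega, h2⟩

lemma enc2_cancel : ∀ {l l' : List ℕ} {a p p' : ℕ},
    Chain' (fun a b => b ≤ a + 1) (a :: l) → Chain' (fun a b => b ≤ a + 1) (a :: l') →
    enc2 a l ++ replicate p false = enc2 a l' ++ replicate p' false → l = l'
  | [], [], _, _, _, _, _, _ => rfl
  | [], b :: l', a, p, p', _, _, h => by
    exfalso
    simp only [enc2, nil_append, cons_append, append_assoc] at h
    have : true ∈ replicate p false := by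
      rw [h]; simp
    simp at this
  | b :: l, [], a, p, p', _, _, h => by
    exfalso
    simp only [enc2, nil_append, cons_append, append_assoc] at h
    have : true ∈ replicate p' false := by
      rw [← h]; simp
    simp at this
  | b :: l, b' :: l', a, p, p', hc, hc', h => by
    simp only [enc2, cons_append, append_assoc] at h
    obtain ⟨h1, h2⟩ := repl_true_cancel h
    replace hc := isChain_cons_cons.1 hc; replace hc' := isChain_cons_cons.1 hc'
    have hb : b = b' := by omega
    subst hb
    rw [enc2_cancel hc.2 hc'.2 h2]

/-- The padded encoding of a permitted sequence into booleans. -/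
def encF (m : ℕ) : List ℕ → List Bool
  | [] => []
  | a :: l => (true :: enc2 a l) ++ replicate (2 * m - (true :: enc2 a l).length) false

lemma permitted_finite_and_card (m t : ℕ) :
    {γ : List ℕ | γ.length = m ∧ PermittedSeq t γ}.Finite ∧ permittedCount m t ≤ 4 ^ m := by
  set S := {γ : List ℕ | γ.length = m ∧ PermittedSeq t γ} with hS
  rcases Nat.eq_zero_or_pos m with rfl | hm
  · have : S = ∅ := by
      ext γ
      simp only [hS, Set.mem_setOf_eq, Set.mem_empty_iff_false, iff_false, not_and]
      intro hγ
      rw [List.length_eq_zero_iff] at hγ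
      subst hγ
      rintro ⟨h, -⟩
      simp at h
    rw [permittedCount, ← hS, this]
    simp
  -- injectivity of encF on S
  have hinj : Set.InjOn (encF m) S := by
    rintro γ ⟨hlen, hhead, hch, -⟩ γ' ⟨hlen', hhead', hch', -⟩ h
    match γ, γ', hhead, hhead' with
    | a :: l, a' :: l', hhead, hhead' =>
      simp only [head?_cons, Option.some.injEq] at hhead hhead'
      subst hhead; subst hhead'
      simp only [encF, cons_append, cons.injEq, true_and] at h
      rw [enc2_cancel hch hch' h]
  -- image is contained in lists of booleans of length 2 * m
  have himg : encF m '' S ⊆ {w : List Bool | w.length = 2 * m} := by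
    rintro w ⟨γ, ⟨hlen, hhead, hch, -⟩, rfl⟩
    match γ, hhead with
    | a :: l, hhead =>
      have h2 : (true :: enc2 a l).length ≤ 2 * m := by
        have := length_enc2 a l hch
        simp only [head?_cons, Option.some.injEq] at hhead
        subst hhead
        simp only [length_cons]
        simp only [length_cons] at hlen
        omega
      simp only [encF, Set.mem_setOf_eq, length_append, length_replicate]
      omega
  have hWsub : {w : List Bool | w.length = 2 * m} ⊆ Set.range (List.ofFn (n := 2 * m)) := by
    intro w hw
    refine ⟨fun i => w.get (Fin.cast hw.symm i), ?_⟩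
    apply List.ext_get
    · simpa using hw.symm
    · intro i h1 h2
      simp
  have hWfin : {w : List Bool | w.length = 2 * m}.Finite :=
    (Set.finite_range _).subset hWsub
  have hSfin : S.Finite :=
    Set.Finite.of_finite_image (hWfin.subset himg) hinj
  refine ⟨hSfin, ?_⟩
  have h1 : permittedCount m t = (encF m '' S).ncard := by
    rw [permittedCount, ← hS, Set.ncard_image_of_injOn hinj]
  rw [h1]
  calc (encF m '' S).ncard ≤ (Set.range (List.ofFn (n := 2 * m))).ncard :=
        Set.ncard_le_ncard (himg.trans hWsub) (Set.finite_range _)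
    _ ≤ Nat.card (Fin (2 * m) → Bool) := by
        rw [← Nat.card_coe_set_eq]
        exact Finite.card_range_le _
    _ = 4 ^ m := by
        rw [Nat.card_eq_fintype_card]
        simp [pow_mul]

lemma one_le_permittedCount' {m t : ℕ} (hm : 1 ≤ m) : 1 ≤ permittedCount m t := by
  have hfin := (permitted_finite_and_card m t).1
  have hmem : List.replicate m 0 ∈ {γ : List ℕ | γ.length = m ∧ PermittedSeq t γ} := by
    refine ⟨by simp, ?_, ?_, ?_⟩
    · obtain ⟨m, rfl⟩ := Nat.exists_eq_add_of_le hm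
      rw [add_comm, List.replicate_succ]
      rfl
    · exact isChain_replicate_of_rel _ (by omega)
    · intro x hx
      rw [List.eq_of_mem_replicate hx]
      exact Nat.zero_le _
  exact (Set.ncard_pos hfin).2 ⟨_, hmem⟩

lemma step_count {L m t : ℕ} (hL : 1 ≤ L) (hLt : L + 1 ≤ t) (hm : 1 ≤ m) :
    catalan L * permittedCount m t ≤ permittedCount (L + m) t := by
  classical
  have hfin := (permitted_finite_and_card m t).1
  have hfin' := (permitted_finite_and_card (L + m) t).1
  set A : Finset (Tree Unit × List ℕ) := (Tree.treesOfNumNodesEq L) ×ˢ hfin.toFinset with hA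
  have himage : ∀ p ∈ A, seqOf p.1 ++ p.2 ∈ hfin'.toFinset := by
    rintro ⟨T, γ⟩ hp
    rw [hA, Finset.mem_product] at hp
    obtain ⟨hT, hγ⟩ := hp
    rw [BinaryTree.mem_treesOfNumNodesEq] at hT
    rw [Set.Finite.mem_toFinset] at hγ
    obtain ⟨hlen, hhead, hch, hbd⟩ := hγ
    have hTne : T ≠ .nil := by
      intro h; rw [h] at hT; simp [Tree.numNodes] at hT; omega
    rw [Set.Finite.mem_toFinset]
    refine ⟨by simp [length_seqOf, hT, hlen], ?_, ?_, ?_⟩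
    · rw [head?_append_of_ne_nil, head?_seqOf hTne]
      intro h
      have := length_seqOf T
      rw [h] at this
      simp [hT] at this
      omega
    · refine (chain'_seqOf T).append hch ?_
      intro x hx y hy
      rw [hhead] at hy
      simp at hy
      omega
    · intro x hx
      rcases List.mem_append.1 hx with h | h
      · have := mem_seqOf_lt x h
        simp only [Tree.numNodes] at this hT; rw [hT] at this
        omega
      · exact hbd x h
  have hinj : Set.InjOn (fun p : Tree Unit × List ℕ => seqOf p.1 ++ p.2) ↑A := by
    rintro ⟨T, γ⟩ hp ⟨T', γ'⟩ hp' h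
    simp only at h
    rw [hA, Finset.coe_product, Set.mem_prod] at hp hp'
    have hTl : (seqOf T).length = (seqOf T').length := by
      rw [length_seqOf, length_seqOf]
      have h1 := hp.1
      have h2 := hp'.1
      simp only [Finset.mem_coe, BinaryTree.mem_treesOfNumNodesEq] at h1 h2
      simp only [Tree.numNodes]; rw [h1, h2]
    obtain ⟨h1, h2⟩ := List.append_inj h hTl
    have := seqOf_injective h1
    simp [this, h2]
  calc catalan L * permittedCount m t = A.card := by
        rw [hA, Finset.card_product, BinaryTree.treesOfNumNodesEq_card_eq_catalan, permittedCount,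
          Set.ncard_eq_toFinset_card _ hfin]
    _ = (A.image (fun p : Tree Unit × List ℕ => seqOf p.1 ++ p.2)).card :=
        (Finset.card_image_of_injOn hinj).symm
    _ ≤ hfin'.toFinset.card := Finset.card_le_card (fun w hw => by
        rw [Finset.mem_image] at hw
        obtain ⟨p, hp, rfl⟩ := hw
        exact himage p hp)
    _ = permittedCount (L + m) t := by
        rw [permittedCount, Set.ncard_eq_toFinset_card _ hfin']

lemma pow_count {L r t : ℕ} (hL : 1 ≤ L) (hLt : L + 1 ≤ t) (hr : 1 ≤ r) :
    ∀ q, catalan L ^ q ≤ permittedCount (q * L + r) t := by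
  intro q
  induction q with
  | zero => simpa using one_le_permittedCount' (t := t) hr
  | succ q ih =>
    have h1 : catalan L ^ (q + 1) = catalan L * catalan L ^ q := by ring
    have h2 : (q + 1) * L + r = L + (q * L + r) := by ring
    rw [h1, h2]
    calc catalan L * catalan L ^ q ≤ catalan L * permittedCount (q * L + r) t :=
          Nat.mul_le_mul_left _ ih
      _ ≤ _ := step_count hL hLt (by omega)

lemma main_count {L m t : ℕ} (hm : 1 ≤ m) (hL : 1 ≤ L) (hLt : L + 1 ≤ t) :
    catalan L ^ ((m - 1) / L) ≤ permittedCount m t := by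
  set q := (m - 1) / L with hq
  have h1 : q * L ≤ m - 1 := by
    rw [hq]; exact Nat.div_mul_le_self _ _
  have h2 : m = q * L + (m - q * L) := by omega
  rw [h2] at *
  exact pow_count hL hLt (by omega) q

lemma catalan_pos (n : ℕ) : 0 < catalan n := by
  have h := succ_mul_catalan_eq_centralBinom n
  have h2 := Nat.centralBinom_pos n
  rcases Nat.eq_zero_or_pos (catalan n) with h0 | h0
  · rw [h0, mul_zero] at h; omega
  · exact h0

noncomputable def F : ℕ → ℝ := fun k =>
  (permittedCount (k - 2 * Nat.sqrt k) (Nat.sqrt k) : ℝ) ^ ((k : ℝ)⁻¹)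

lemma F_le_four (k : ℕ) : F k ≤ 4 := by
  rcases Nat.eq_zero_or_pos k with rfl | hk
  · simp [F]
  have h1 : (permittedCount (k - 2 * Nat.sqrt k) (Nat.sqrt k) : ℝ) ≤ (4 : ℝ) ^ (k : ℕ) := by
    have := (permitted_finite_and_card (k - 2 * Nat.sqrt k) (Nat.sqrt k)).2
    have h2 : (4:ℕ) ^ (k - 2 * Nat.sqrt k) ≤ 4 ^ k := Nat.pow_le_pow_right (by norm_num) (by omega)
    exact_mod_cast this.trans h2
  calc F k ≤ ((4:ℝ) ^ (k:ℕ)) ^ ((k:ℝ)⁻¹) :=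
        Real.rpow_le_rpow (by positivity) h1 (by positivity)
    _ = 4 := by
        rw [← Real.rpow_natCast 4 k, ← Real.rpow_mul (by norm_num),
          mul_inv_cancel₀ (by exact_mod_cast hk.ne'), Real.rpow_one]

lemma tendsto_natSqrt_atTop : Tendsto (fun k : ℕ => ((Nat.sqrt k : ℕ) : ℝ)) atTop atTop := by
  rw [tendsto_atTop_atTop]
  intro b
  refine ⟨(⌈b⌉₊ + 1) * (⌈b⌉₊ + 1), fun k hk => ?_⟩
  have h1 : ⌈b⌉₊ + 1 ≤ Nat.sqrt k := Nat.le_sqrt.2 hk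
  calc b ≤ (⌈b⌉₊ : ℝ) := Nat.le_ceil b
    _ ≤ _ := by exact_mod_cast h1.trans' (by omega)

lemma tendsto_sqrt_div : Tendsto (fun k : ℕ => ((Nat.sqrt k : ℝ)) / k) atTop (𝓝 0) := by
  apply squeeze_zero' (g := fun k : ℕ => ((Nat.sqrt k : ℝ))⁻¹)
  · filter_upwards [eventually_ge_atTop 1] with k hk
    positivity
  · filter_upwards [eventually_ge_atTop 1] with k hk
    have hs : 1 ≤ Nat.sqrt k := Nat.le_sqrt.2 (by omega)
    have h1 : (0:ℝ) < (Nat.sqrt k : ℝ) := by exact_mod_cast hs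
    have h2 : (0:ℝ) < (k:ℝ) := by exact_mod_cast hk
    rw [div_le_iff₀ h2, inv_mul_eq_div, le_div_iff₀ h1]
    have := Nat.sqrt_le k
    exact_mod_cast this
  · exact tendsto_natSqrt_atTop.inv_tendsto_atTop

/-- for each `L ≥ 1`, `(catalan L)^(1/L) ≤ liminf F`. -/
lemma catalan_rpow_le_liminf {L : ℕ} (hL : 1 ≤ L) :
    (catalan L : ℝ) ^ ((1 : ℝ) / L) ≤ liminf F atTop := by
  have hc1 : (1:ℝ) ≤ (catalan L : ℝ) := by exact_mod_cast catalan_pos L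
  set e : ℕ → ℝ := fun k => ((k:ℝ) - 2 * (Nat.sqrt k : ℝ) - L) / (L * k) with he
  set g : ℕ → ℝ := fun k => (catalan L : ℝ) ^ (e k) with hg
  have hLpos : (0:ℝ) < L := by exact_mod_cast hL
  -- limit of the exponent
  have h_e : Tendsto e atTop (𝓝 ((1:ℝ)/L)) := by
    have h0 : Tendsto (fun k : ℕ => ((1:ℝ) - (2 * (Nat.sqrt k : ℝ) + L) / k) / L) atTop
        (𝓝 ((1 - 0)/L)) := by
      apply Tendsto.div_const
      apply Tendsto.const_sub
      have h00 : Tendsto (fun k : ℕ => 2 * ((Nat.sqrt k : ℝ)/k) + L / k) atTop (𝓝 0) := by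
        have := ((tendsto_sqrt_div.const_mul 2).add (tendsto_const_div_atTop_nhds_zero_nat (L:ℝ)))
        simpa using this
      apply h00.congr
      intro k
      rw [add_div, mul_div_assoc]
    rw [show ((1:ℝ) - 0)/L = 1/L by ring] at h0
    apply h0.congr'
    filter_upwards [eventually_ge_atTop 1] with k hk
    have hkpos : (0:ℝ) < (k:ℝ) := by exact_mod_cast hk
    simp only [he]
    field_simp
    ring
  have h_g : Tendsto g atTop (𝓝 ((catalan L : ℝ) ^ ((1:ℝ)/L))) := by
    apply Filter.Tendsto.rpow tendsto_const_nhds h_e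
    left; positivity
  -- eventual inequality g ≤ F
  have h_ev : ∀ᶠ k in atTop, g k ≤ F k := by
    filter_upwards [eventually_ge_atTop ((L+2)*(L+2))] with k hk
    have hsL2 : L + 2 ≤ Nat.sqrt k := Nat.le_sqrt.2 hk
    have hsL : L + 1 ≤ Nat.sqrt k := by omega
    have hs5 : 3 ≤ Nat.sqrt k := by omega
    have hssk : Nat.sqrt k * Nat.sqrt k ≤ k := Nat.sqrt_le k
    have h3s : 3 * Nat.sqrt k ≤ Nat.sqrt k * Nat.sqrt k :=
      Nat.mul_le_mul_right _ (by omega)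
    set s := Nat.sqrt k with hs
    set m := k - 2 * s with hm
    have hm1 : 1 ≤ m := by omega
    have hk1 : (1:ℕ) ≤ k := by omega
    have hkpos : (0:ℝ) < (k:ℝ) := by exact_mod_cast hk1
    set q := (m - 1) / L with hq
    -- F k ≥ (catalan L) ^ (q / k)
    have h1 : ((catalan L : ℝ) ^ (q:ℕ)) ^ ((k:ℝ)⁻¹) ≤ F k := by
      apply Real.rpow_le_rpow (by positivity) ?_ (by positivity)
      exact_mod_cast main_count hm1 hL hsL
    have h2 : ((catalan L : ℝ) ^ (q:ℕ)) ^ ((k:ℝ)⁻¹) = (catalan L : ℝ) ^ ((q:ℝ) * (k:ℝ)⁻¹) := by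
      rw [← Real.rpow_natCast (catalan L : ℝ) q, ← Real.rpow_mul (by positivity)]
    refine le_trans ?_ (h2 ▸ h1)
    simp only [hg]
    apply Real.rpow_le_rpow_of_exponent_le hc1
    -- e k ≤ q * k⁻¹
    have hqL : m ≤ q * L + L := by
      have h5 : L * q + (m - 1) % L = m - 1 := Nat.div_add_mod _ _
      have h6 : (m - 1) % L < L := Nat.mod_lt _ (by omega)
      rw [mul_comm]
      generalize hP : L * q = P at h5 ⊢
      omega
    have hq' : ((k:ℝ) - 2 * (s:ℝ) - L) / L ≤ (q:ℝ) := by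
      rw [div_le_iff₀ hLpos]
      have hmr : (m:ℝ) = (k:ℝ) - 2 * (s:ℝ) := by
        have : (m:ℕ) + 2 * s = k := by omega
        have := congrArg (fun x : ℕ => (x:ℝ)) this
        push_cast at this
        linarith
      have : (m:ℝ) ≤ (q:ℝ) * L + L := by exact_mod_cast hqL
      linarith
    simp only [he]
    rw [div_mul_eq_div_div]
    rw [div_le_iff₀ hkpos, mul_assoc, inv_mul_cancel₀ hkpos.ne', mul_one]
    exact hq'
  -- conclude via liminf
  have hlim : liminf g atTop = (catalan L : ℝ) ^ ((1:ℝ)/L) := h_g.liminf_eq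
  rw [← hlim]
  exact liminf_le_liminf h_ev h_g.isBoundedUnder_ge
    (isCoboundedUnder_ge_of_le atTop (x := 4) F_le_four)

lemma four_le_liminf : (4:ℝ) ≤ liminf F atTop := by
  set u : ℕ → ℝ := fun L => ((L:ℝ) * ((L:ℝ) + 1)) ^ ((1:ℝ)/L) with hu
  have key : ∀ᶠ L : ℕ in atTop, 4 / u L ≤ liminf F atTop := by
    filter_upwards [eventually_ge_atTop 4] with L hL4
    have hL1 : 1 ≤ L := by omega
    have hLpos : (0:ℝ) < L := by exact_mod_cast hL1
    refine le_trans ?_ (catalan_rpow_le_liminf hL1)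
    have h1 : (4:ℝ)^(L:ℕ) / ((L:ℝ) * ((L:ℝ)+1)) ≤ (catalan L : ℝ) := by
      have h2 : (4:ℕ)^L ≤ L * ((L+1) * catalan L) := by
        rw [succ_mul_catalan_eq_centralBinom]
        exact (Nat.four_pow_lt_mul_centralBinom L hL4).le
      have h2' : ((4:ℝ))^(L:ℕ) ≤ (L:ℝ) * (((L:ℝ)+1) * (catalan L :ℝ)) := by exact_mod_cast h2
      rw [div_le_iff₀ (by positivity)]
      nlinarith [h2']
    calc 4 / u L = ((4:ℝ)^(L:ℕ) / ((L:ℝ) * ((L:ℝ)+1))) ^ ((1:ℝ)/L) := by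
          rw [Real.div_rpow (by positivity) (by positivity)]
          congr 1
          rw [← Real.rpow_natCast 4 L, ← Real.rpow_mul (by norm_num)]
          rw [mul_one_div, div_self (ne_of_gt hLpos), Real.rpow_one]
      _ ≤ (catalan L : ℝ) ^ ((1:ℝ)/L) := Real.rpow_le_rpow (by positivity) h1 (by positivity)
  have h2L : Tendsto (fun L : ℕ => 2 * (L:ℝ)) atTop atTop :=
    (tendsto_natCast_atTop_atTop).const_mul_atTop (by norm_num)
  have hw : Tendsto (fun L : ℕ => (2 * (L:ℝ)) ^ ((1:ℝ)/(2 * (L:ℝ)))) atTop (𝓝 1) := by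
    exact tendsto_rpow_div.comp h2L
  have hv : Tendsto (fun L : ℕ => ((2 * (L:ℝ)) ^ ((1:ℝ)/(2 * (L:ℝ)))) ^ (4:ℕ)) atTop (𝓝 1) := by
    have := hw.pow 4
    simpa using this
  have hulim : Tendsto u atTop (𝓝 1) := by
    apply tendsto_of_tendsto_of_tendsto_of_le_of_le' tendsto_const_nhds hv
    · filter_upwards [eventually_ge_atTop 1] with L hL1
      exact Real.one_le_rpow (by push_cast; nlinarith [show (1:ℝ) ≤ (L:ℝ) from by exact_mod_cast hL1]) (by positivity)
    · filter_upwards [eventually_ge_atTop 1] with L hL1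
      have hLR : (1:ℝ) ≤ (L:ℝ) := by exact_mod_cast hL1
      have hLpos : (0:ℝ) < L := by linarith
      have e1 : ((2 * (L:ℝ)) ^ ((1:ℝ)/(2 * (L:ℝ)))) ^ (4:ℕ) = (2 * (L:ℝ)) ^ ((2:ℝ)/L) := by
        rw [← Real.rpow_natCast ((2 * (L:ℝ)) ^ ((1:ℝ)/(2 * (L:ℝ)))) 4,
          ← Real.rpow_mul (by positivity)]
        congr 1
        field_simp
        ring
      rw [e1, hu]
      calc ((L:ℝ) * ((L:ℝ) + 1)) ^ ((1:ℝ)/L)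
          ≤ ((2 * (L:ℝ)) * (2 * (L:ℝ))) ^ ((1:ℝ)/L) :=
            Real.rpow_le_rpow (by positivity) (by nlinarith) (by positivity)
        _ = (2 * (L:ℝ)) ^ ((2:ℝ)/L) := by
            rw [show (2*(L:ℝ)) * (2*(L:ℝ)) = (2*(L:ℝ)) ^ ((2:ℕ):ℝ) from by
                rw [Real.rpow_natCast]; ring,
              ← Real.rpow_mul (by positivity)]
            congr 1
            push_cast
            field_simp
  have hfinal : Tendsto (fun L : ℕ => 4 / u L) atTop (𝓝 4) := by
    have := Filter.Tendsto.div (tendsto_const_nhds (x := (4:ℝ))) hulim one_ne_zero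
    simpa only [div_one, Pi.div_def] using this
  exact le_of_tendsto hfinal key

end PermProof

/-- With `t = ⌊√k⌋`, `liminf_{k → ∞} Γ(k - 2t, t)^{1/k} ≥ 4`. -/
theorem liminf_permittedCount_rpow_ge_four :
    (4 : ℝ) ≤ Filter.liminf
      (fun k : ℕ =>
        (permittedCount (k - 2 * Nat.sqrt k) (Nat.sqrt k) : ℝ) ^ ((k : ℝ)⁻¹))
      Filter.atTop :=
  PermProof.four_le_liminf
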